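/- Lemma 3.3 (evaluation of Y + Y^{−1}): for every Laurent polynomial f ∈ F[U,U^{−1}] and every integer N ≥ 1, ((𝒴 + 𝒴′)f)(−q^{2N}) = −(t₁ q^{−2N} + t₁^{−1} q^{2N}) f(−q^{2N}) + t̄₁ ∑_{p=0}^{N−1} {2p} f(−q^{2(2p−N)}) − t̄₂ ∑_{p=0}^{N−1} {2p+1} f(−q^{2(2p−N+1)}), where g(c) denotes the evaluation of g ∈ F[U,U^{−1}] at U = c. -/

import Mathlib

noncomputable section

open LaurentPolynomial

/-- The field `F = ℚ(q, t₁, t₂)` of rational functions in three indeterminates. -/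
abbrev F : Type := FractionRing (MvPolynomial (Fin 3) ℚ)

def q : F := algebraMap (MvPolynomial (Fin 3) ℚ) F (MvPolynomial.X 0)
def t1 : F := algebraMap (MvPolynomial (Fin 3) ℚ) F (MvPolynomial.X 1)
def t2 : F := algebraMap (MvPolynomial (Fin 3) ℚ) F (MvPolynomial.X 2)

/-- `a_k = (t̄₁ − t̄₂ q^{2k−1})/(1 − q^{4k−2})`. -/
def aop (k : ℤ) : F :=
  ((t1 - t1⁻¹) - (t2 - t2⁻¹) * q ^ (2 * k - 1)) / (1 - q ^ (4 * k - 2))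

/-- Evaluation of a Laurent polynomial `f ∈ F[U,U⁻¹]` at a point `c ∈ F`
(sending the monomial `U^k` to `c^k`). -/
def evalL (c : F) (f : LaurentPolynomial F) : F := Finsupp.sum f.coeff fun k r => r * c ^ k

/- ### auxiliary lemmas -/

lemma q_ne_zero : q ≠ 0 := by
  rw [q, Ne, IsFractionRing.to_map_eq_zero_iff]
  exact MvPolynomial.X_ne_zero 0

lemma t1_ne_zero : t1 ≠ 0 := by
  rw [t1, Ne, IsFractionRing.to_map_eq_zero_iff]
  exact MvPolynomial.X_ne_zero 1

lemma q_pow_ne_one (n : ℕ) (hn : n ≠ 0) : q ^ n ≠ 1 := by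
  intro h
  rw [q, ← map_pow,
    show (1 : F) = algebraMap (MvPolynomial (Fin 3) ℚ) F 1 from (map_one _).symm] at h
  have h2 := IsFractionRing.injective (MvPolynomial (Fin 3) ℚ) F h
  have h3 := congrArg (MvPolynomial.eval fun _ => (2 : ℚ)) h2
  simp at h3
  have : (1:ℚ) < 2 ^ n := one_lt_pow₀ one_lt_two hn
  rw [h3] at this
  exact lt_irrefl _ this

lemma q_zpow_ne_one (m : ℤ) (hm : m ≠ 0) : q ^ m ≠ 1 := by
  rcases m.lt_or_lt_of_ne hm with h | h
  · intro he
    have : q ^ (-m) = 1 := by rw [zpow_neg, he, inv_one]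
    obtain ⟨n, hn⟩ : ∃ n : ℕ, -m = (n : ℤ) := ⟨(-m).toNat, by omega⟩
    rw [hn, zpow_natCast] at this
    exact q_pow_ne_one n (by omega) this
  · intro he
    obtain ⟨n, hn⟩ : ∃ n : ℕ, m = (n : ℤ) := ⟨m.toNat, by omega⟩
    rw [hn, zpow_natCast] at he
    exact q_pow_ne_one n (by omega) he

def evalHom (x : F) : LaurentPolynomial F →ₗ[F] F :=
  (Finsupp.linearCombination F (fun k : ℤ => x ^ k)).comp
    (AddMonoidAlgebra.coeffLinearEquiv F).toLinearMap

lemma evalL_eq (x : F) (f : LaurentPolynomial F) : evalL x f = evalHom x f := rfl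

lemma evalL_T (x : F) (k : ℤ) : evalL x (T k) = x ^ k := by
  rw [evalL_eq, evalHom]
  show Finsupp.linearCombination F (fun k : ℤ => x ^ k) (Finsupp.single k 1) = x ^ k
  rw [Finsupp.linearCombination_single, one_smul]

lemma evalL_single (x : F) (a : ℤ) (b : F) :
    evalL x (AddMonoidAlgebra.single a b : LaurentPolynomial F) = b * x ^ a := by
  rw [evalL_eq, evalHom]
  show Finsupp.linearCombination F (fun k : ℤ => x ^ k) (Finsupp.single a b) = b * x ^ a
  rw [Finsupp.linearCombination_single, smul_eq_mul]

lemma evalL_add (x : F) (f g : LaurentPolynomial F) :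
    evalL x (f + g) = evalL x f + evalL x g := by
  rw [evalL_eq, evalL_eq, evalL_eq]; exact map_add (evalHom x) f g

lemma evalL_sub (x : F) (f g : LaurentPolynomial F) :
    evalL x (f - g) = evalL x f - evalL x g := by
  rw [evalL_eq, evalL_eq, evalL_eq]; exact map_sub (evalHom x) f g

lemma evalL_smul (x : F) (r : F) (f : LaurentPolynomial F) :
    evalL x (r • f) = r * evalL x f := by
  rw [evalL_eq, evalL_eq, map_smul, smul_eq_mul]

lemma evalL_zero (x : F) : evalL x (0 : LaurentPolynomial F) = 0 := by
  rw [evalL_eq]; exact map_zero (evalHom x)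

set_option maxHeartbeats 1000000 in
lemma key_poly {K : Type*} [Field K] (q c C v t1 T1 T2 A B S1 S2 : K)
    (hA : A * (q^2 - v^2) = T1*q^2 - T2*v*q)
    (hB : B * (v^2*q^2 - 1) = T1*v^2*q^2 - T2*v*q)
    (hS1 : S1 * (q^2*v^2 - 1) = -(C^2*c) - 1)
    (hS2 : S2 * (v^2 - q^2) * c = -(C^2 + c)*q^2) :
    (t1*C^2*q + t1*C^2*c^2*q - A*(C^2*q + c*q) - B*(C^2*c^2*q + c*q) + T1*c*q)
        * ((q^2 - v^2)*(v^2*q^2 - 1))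
    = ((t1 + c^2*(t1 - T1))*C^2*q + T1*(S1 - S2)*c*q - T2*v*c*(q^2*S1 - S2))
        * ((q^2 - v^2)*(v^2*q^2 - 1)) := by
  linear_combination (-(C^2*q + c*q)*(v^2*q^2-1))*hA + (-(C^2*c^2*q + c*q)*(q^2-v^2))*hB +
    (-(T1*c*q - T2*v*c*q^2)*(q^2-v^2))*hS1 + (-(T1*q - T2*v)*(v^2*q^2-1))*hS2

set_option maxHeartbeats 2000000 in
lemma key_div {K : Type*} [Field K] (q c C v t1 t2 A B S1 S2 : K)
    (hq : q ≠ 0) (hc : c ≠ 0) (hC : C ≠ 0) (ht1 : t1 ≠ 0)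
    (hd1 : q^2 - v^2 ≠ 0) (hd2 : v^2*q^2 - 1 ≠ 0)
    (hA : A * (q^2 - v^2) = (t1-t1⁻¹)*q^2 - (t2-t2⁻¹)*v*q)
    (hB : B * (v^2*q^2 - 1) = (t1-t1⁻¹)*v^2*q^2 - (t2-t2⁻¹)*v*q)
    (hS1 : S1 * (q^2*v^2 - 1) = -(C^2*c) - 1)
    (hS2 : S2 * (v^2 - q^2) * c = -(C^2 + c)*q^2) :
    t1 * (C*c⁻¹) - A*(C*c⁻¹ + C⁻¹) + (t1*(C*c) - B*(C*c + C⁻¹) + (t1-t1⁻¹)*C⁻¹)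
    = -(t1*(-c⁻¹) + t1⁻¹*(-c))*C + (t1-t1⁻¹)*(C⁻¹*S1 - C⁻¹*S2)
      - (t2-t2⁻¹)*((v*C⁻¹*q)*S1 - (v*C⁻¹*q⁻¹)*S2) := by
  have KP := key_poly q c C v t1 (t1-t1⁻¹) (t2-t2⁻¹) A B S1 S2 hA hB hS1 hS2
  have hE := mul_right_cancel₀ (mul_ne_zero hd1 hd2) KP
  refine mul_right_cancel₀ (mul_ne_zero (mul_ne_zero hc hC) hq) ?_
  calc (t1 * (C*c⁻¹) - A*(C*c⁻¹ + C⁻¹) + (t1*(C*c) - B*(C*c + C⁻¹) + (t1-t1⁻¹)*C⁻¹))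
        * (c*C*q)
      = t1*C^2*q + t1*C^2*c^2*q - A*(C^2*q + c*q) - B*(C^2*c^2*q + c*q) + (t1-t1⁻¹)*c*q := by
        field_simp; ring
    _ = (t1 + c^2*(t1 - (t1-t1⁻¹)))*C^2*q + (t1-t1⁻¹)*(S1 - S2)*c*q
          - (t2-t2⁻¹)*v*c*(q^2*S1 - S2) := hE
    _ = (-(t1*(-c⁻¹) + t1⁻¹*(-c))*C + (t1-t1⁻¹)*(C⁻¹*S1 - C⁻¹*S2)
          - (t2-t2⁻¹)*((v*C⁻¹*q)*S1 - (v*C⁻¹*q⁻¹)*S2)) * (c*C*q) := by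
        field_simp; ring

lemma zpow_two' {K : Type*} [Field K] (x : K) : x ^ (2:ℤ) = x * x := by
  rw [show (2:ℤ) = ((2:ℕ):ℤ) by norm_num, zpow_natCast, pow_two]

set_option maxHeartbeats 2000000 in
lemma eval_mono (Y Y' : Module.End F (LaurentPolynomial F))
    (hY : ∀ k : ℤ, Y (T k) = t1 • T (k - 1) - aop k • (T (k - 1) + T (-k)))
    (hY' : ∀ k : ℤ, Y' (T k) =
      t1 • T (k + 1) - aop (-k) • (T (k + 1) + T (-k)) + (t1 - t1⁻¹) • T (-k))
    (N : ℕ) (k : ℤ) :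
    evalL (-(q ^ (2 * (N : ℤ)))) ((Y + Y') (T k)) =
      -(t1 * q ^ (-(2 * (N : ℤ))) + t1⁻¹ * q ^ (2 * (N : ℤ))) * evalL (-(q ^ (2 * (N : ℤ)))) (T k)
      + (t1 - t1⁻¹) * ∑ p ∈ Finset.range N,
          (q ^ (2 * (p : ℤ)) - q ^ (-(2 * (p : ℤ)))) *
            evalL (-(q ^ (2 * (2 * (p : ℤ) - (N : ℤ))))) (T k)
      - (t2 - t2⁻¹) * ∑ p ∈ Finset.range N,
          (q ^ (2 * (p : ℤ) + 1) - q ^ (-(2 * (p : ℤ) + 1))) *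
            evalL (-(q ^ (2 * (2 * (p : ℤ) - (N : ℤ) + 1)))) (T k) := by
  have hq0 : q ≠ 0 := q_ne_zero
  have ht1 : t1 ≠ 0 := t1_ne_zero
  set c : F := -(q ^ (2 * (N:ℤ))) with hc_def
  have hqc : q ^ (2*(N:ℤ)) = -c := by rw [hc_def, neg_neg]
  have hc0 : c ≠ 0 := by
    rw [hc_def, neg_ne_zero]; exact zpow_ne_zero _ hq0
  have hqcinv : q ^ (-(2*(N:ℤ))) = -c⁻¹ := by rw [zpow_neg, hqc, inv_neg]
  set v : F := q ^ (2*k) with hv_def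
  have hv0 : v ≠ 0 := zpow_ne_zero _ hq0
  set C : F := c ^ k with hC_def
  have hC0 : C ≠ 0 := zpow_ne_zero _ hc0
  clear_value c v C
  -- nonvanishing of denominators
  have hd1 : (q:F)^2 - v^2 ≠ 0 := by
    intro h
    apply q_zpow_ne_one (4*k-2) (by omega)
    have h' : (q:F)^2 = v^2 := by linear_combination h
    have hvv : v * v = q * q := by rw [← pow_two, ← pow_two, h']
    rw [show (4*k-2:ℤ) = 2*k + 2*k + (-1) + (-1) by ring, zpow_add₀ hq0, zpow_add₀ hq0,
      zpow_add₀ hq0, zpow_neg_one, ← hv_def, hvv]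
    field_simp
  have hd2 : v^2*(q:F)^2 - 1 ≠ 0 := by
    intro h
    apply q_zpow_ne_one (4*k+2) (by omega)
    have h' : v^2*(q:F)^2 = 1 := by linear_combination h
    rw [show (4*k+2:ℤ) = 2*k + 2*k + 1 + 1 by ring, zpow_add₀ hq0, zpow_add₀ hq0,
      zpow_add₀ hq0, zpow_one, ← hv_def]
    calc v * v * q * q = v^2*q^2 := by ring
      _ = 1 := h'
  -- the aop relations
  have hA : aop k * ((q:F)^2 - v^2) = (t1-t1⁻¹)*q^2 - (t2-t2⁻¹)*v*q := by
    have e1 : q ^ (2*k-1) = v * q⁻¹ := by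
      rw [show (2*k-1:ℤ) = 2*k + (-1) by ring, zpow_add₀ hq0, zpow_neg_one, ← hv_def]
    have e2 : q ^ (4*k-2) = v * v * (q*q)⁻¹ := by
      rw [show (4*k-2:ℤ) = 2*k + 2*k + (-1) + (-1) by ring, zpow_add₀ hq0, zpow_add₀ hq0,
        zpow_add₀ hq0, zpow_neg_one, ← hv_def]
      ring
    have hden : (1:F) - v*v*(q*q)⁻¹ ≠ 0 := by
      intro h
      apply hd1
      have hqq : (q:F)*q ≠ 0 := mul_ne_zero hq0 hq0
      have := congrArg (· * ((q:F)*q)) h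
      simp only [sub_mul, one_mul, zero_mul] at this
      rw [mul_assoc, inv_mul_cancel₀ hqq, mul_one] at this
      linear_combination this
    rw [aop, e1, e2, div_mul_eq_mul_div, div_eq_iff hden]
    field_simp
  have hB : aop (-k) * (v^2*(q:F)^2 - 1) = (t1-t1⁻¹)*v^2*q^2 - (t2-t2⁻¹)*v*q := by
    have e1 : q ^ (2*(-k)-1) = (v * q)⁻¹ := by
      rw [show (2*(-k)-1:ℤ) = -(2*k + 1) by ring, zpow_neg, zpow_add₀ hq0, zpow_one, ← hv_def]
    have e2 : q ^ (4*(-k)-2) = (v * v * (q*q))⁻¹ := by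
      rw [show (4*(-k)-2:ℤ) = -(2*k + 2*k + 1 + 1) by ring, zpow_neg, zpow_add₀ hq0,
        zpow_add₀ hq0, zpow_add₀ hq0, zpow_one, ← hv_def]
      ring_nf
    have hvvqq : v*v*((q:F)*q) ≠ 0 := mul_ne_zero (mul_ne_zero hv0 hv0) (mul_ne_zero hq0 hq0)
    have hden : (1:F) - (v*v*(q*q))⁻¹ ≠ 0 := by
      intro h
      apply hd2
      have := congrArg (· * (v*v*((q:F)*q))) h
      simp only [sub_mul, one_mul, zero_mul] at this
      rw [inv_mul_cancel₀ hvvqq] at this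
      linear_combination this
    rw [aop, e1, e2, div_mul_eq_mul_div, div_eq_iff hden]
    field_simp
  -- power bookkeeping
  have hq2N : (q:F) ^ (2*N : ℕ) = -c := by
    rw [← zpow_natCast q (2*N), show ((2*N : ℕ) : ℤ) = 2*(N:ℤ) by push_cast; ring, hqc]
  have hv2N : v ^ (2*N : ℕ) = C^2 := by
    rw [hv_def, ← zpow_natCast (q ^ (2*k)) (2*N), ← zpow_mul,
      show (2*k) * ((2*N:ℕ) : ℤ) = (2*(N:ℤ)) * (2*k) by push_cast; ring,
      zpow_mul, hqc, zpow_mul, zpow_two' (-c), neg_mul_neg, ← zpow_two' c, ← zpow_mul,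
      show (2:ℤ)*k = k*2 by ring, zpow_mul, ← hC_def, zpow_two' C, pow_two]
  have hvNZ : v ^ (2*(N:ℤ)) = C^2 := by
    rw [show (2*(N:ℤ)) = ((2*N : ℕ) : ℤ) by push_cast; ring, zpow_natCast, hv2N]
  have hx1N : ((q:F)^2*v^2) ^ N = -(C^2*c) := by
    rw [mul_pow, ← pow_mul, ← pow_mul, hq2N, hv2N]
    ring
  have hx2N : (v^2/(q:F)^2) ^ N = C^2 / (-c) := by
    rw [div_pow, ← pow_mul, ← pow_mul, hq2N, hv2N]
  -- geometric sums
  set S1 : F := ∑ p ∈ Finset.range N, ((q:F)^2*v^2)^p with hS1_def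
  set S2 : F := ∑ p ∈ Finset.range N, (v^2/(q:F)^2)^p with hS2_def
  clear_value S1 S2
  have hS1 : S1 * ((q:F)^2*v^2 - 1) = -(C^2*c) - 1 := by
    rw [hS1_def, geom_sum_mul, hx1N]
  have hS2 : S2 * (v^2 - (q:F)^2) * c = -(C^2 + c)*q^2 := by
    have g := geom_sum_mul (v^2/(q:F)^2) N
    rw [hx2N, ← hS2_def] at g
    have hq2 : (q:F)^2 ≠ 0 := pow_ne_zero _ hq0
    have e : S2 * (v^2 - (q:F)^2) * c = S2 * (v^2/q^2 - 1) * (q^2 * c) := by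
      field_simp
    rw [e, g]
    have h1 : C^2 / -c * c = -C^2 := by
      rw [div_neg, neg_mul, div_mul_cancel₀ _ hc0]
    linear_combination (q:F)^2 * h1
  -- per-term rewriting of the sums
  have hvp : ∀ p : ℕ, v ^ (2*(p:ℤ)) = v ^ (2*p : ℕ) := fun p => by
    rw [show (2*(p:ℤ)) = ((2*p : ℕ) : ℤ) by push_cast; ring, zpow_natCast]
  have hqp : ∀ p : ℕ, (q:F) ^ (2*(p:ℤ)) = q ^ (2*p : ℕ) := fun p => by
    rw [show (2*(p:ℤ)) = ((2*p : ℕ) : ℤ) by push_cast; ring, zpow_natCast]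
  have sum1 : ∑ p ∈ Finset.range N,
      (q ^ (2 * (p : ℤ)) - q ^ (-(2 * (p : ℤ)))) * (-(q ^ (2 * (2 * (p : ℤ) - (N : ℤ)))))^k
      = C⁻¹*S1 - C⁻¹*S2 := by
    rw [hS1_def, hS2_def, Finset.mul_sum, Finset.mul_sum, ← Finset.sum_sub_distrib]
    refine Finset.sum_congr rfl fun p _ => ?_
    have hb : -(q ^ (2*(2*(p:ℤ) - (N:ℤ)))) = c * q ^ (4*((p:ℤ) - N)) := by
      rw [show (2*(2*(p:ℤ) - (N:ℤ))) = 2*(N:ℤ) + 4*((p:ℤ) - N) by ring, zpow_add₀ hq0, hqc]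
      ring
    have hX : ((q:F) ^ (4*((p:ℤ) - N)))^k = v^(2*(p:ℤ)) * (C^2)⁻¹ := by
      rw [← zpow_mul, show (4*((p:ℤ)-N))*k = (2*k)*(2*(p:ℤ)) + -((2*k)*(2*(N:ℤ))) by ring,
        zpow_add₀ hq0, zpow_neg, zpow_mul q (2*k) (2*(p:ℤ)), zpow_mul q (2*k) (2*(N:ℤ)),
        ← hv_def, hvNZ]
    rw [hb, mul_zpow, ← hC_def, hX]
    rw [zpow_neg, hvp p, hqp p, mul_pow, div_pow, ← pow_mul, ← pow_mul]
    have hq2p : (q:F) ^ (2*p : ℕ) ≠ 0 := pow_ne_zero _ hq0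
    field_simp
  have sum2 : ∑ p ∈ Finset.range N,
      (q ^ (2 * (p : ℤ) + 1) - q ^ (-(2 * (p : ℤ) + 1))) *
        (-(q ^ (2 * (2 * (p : ℤ) - (N : ℤ) + 1))))^k
      = (v*C⁻¹*q)*S1 - (v*C⁻¹*q⁻¹)*S2 := by
    rw [hS1_def, hS2_def, Finset.mul_sum, Finset.mul_sum, ← Finset.sum_sub_distrib]
    refine Finset.sum_congr rfl fun p _ => ?_
    have hb : -(q ^ (2*(2*(p:ℤ) - (N:ℤ) + 1))) = c * q ^ (4*((p:ℤ) - N) + 2) := by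
      rw [show (2*(2*(p:ℤ) - (N:ℤ) + 1)) = 2*(N:ℤ) + (4*((p:ℤ) - N) + 2) by ring,
        zpow_add₀ hq0, hqc]
      ring
    have hX : ((q:F) ^ (4*((p:ℤ) - N) + 2))^k = v^(2*(p:ℤ)) * (C^2)⁻¹ * v := by
      rw [← zpow_mul,
        show (4*((p:ℤ)-N)+2)*k = (2*k)*(2*(p:ℤ)) + -((2*k)*(2*(N:ℤ))) + 2*k by ring,
        zpow_add₀ hq0, zpow_add₀ hq0, zpow_neg, zpow_mul q (2*k) (2*(p:ℤ)),
        zpow_mul q (2*k) (2*(N:ℤ)), ← hv_def, hvNZ]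
    have he1 : (q:F) ^ (2*(p:ℤ) + 1) = q ^ (2*p : ℕ) * q := by
      rw [zpow_add₀ hq0, zpow_one, hqp p]
    have he2 : (q:F) ^ (-(2*(p:ℤ) + 1)) = (q ^ (2*p : ℕ) * q)⁻¹ := by
      rw [zpow_neg, zpow_add₀ hq0, zpow_one, hqp p]
    rw [hb, mul_zpow, ← hC_def, hX, he1, he2]
    rw [hvp p, mul_pow, div_pow, ← pow_mul, ← pow_mul]
    have hq2p : (q:F) ^ (2*p : ℕ) ≠ 0 := pow_ne_zero _ hq0
    field_simp
  -- assemble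
  simp only [LinearMap.add_apply, evalL_add, hY, hY', evalL_sub, evalL_smul, evalL_T]
  rw [sum1, sum2, hqc, hqcinv]
  have hckm1 : c ^ (k-1) = C * c⁻¹ := by
    rw [zpow_sub₀ hc0, zpow_one, ← hC_def, div_eq_mul_inv]
  have hckp1 : c ^ (k+1) = C * c := by
    rw [zpow_add₀ hc0, zpow_one, ← hC_def]
  have hcmk : c ^ (-k) = C⁻¹ := by rw [zpow_neg, ← hC_def]
  rw [hckm1, hckp1, hcmk, ← hC_def]
  linear_combination key_div q c C v t1 t2 (aop k) (aop (-k)) S1 S2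
    hq0 hc0 hC0 ht1 hd1 hd2 hA hB hS1 hS2

set_option maxHeartbeats 2000000 in
set_option maxRecDepth 4000 in
theorem evaluation_formula_Y_plus_Yinv
    (Y Y' : Module.End F (LaurentPolynomial F))
    (hY : ∀ k : ℤ, Y (T k) = t1 • T (k - 1) - aop k • (T (k - 1) + T (-k)))
    (hY' : ∀ k : ℤ, Y' (T k) =
      t1 • T (k + 1) - aop (-k) • (T (k + 1) + T (-k)) + (t1 - t1⁻¹) • T (-k))
    (f : LaurentPolynomial F) (N : ℕ) (hN : 1 ≤ N) :
    evalL (-(q ^ (2 * (N : ℤ)))) ((Y + Y') f) =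
      -(t1 * q ^ (-(2 * (N : ℤ))) + t1⁻¹ * q ^ (2 * (N : ℤ))) * evalL (-(q ^ (2 * (N : ℤ)))) f
      + (t1 - t1⁻¹) * ∑ p ∈ Finset.range N,
          (q ^ (2 * (p : ℤ)) - q ^ (-(2 * (p : ℤ)))) *
            evalL (-(q ^ (2 * (2 * (p : ℤ) - (N : ℤ))))) f
      - (t2 - t2⁻¹) * ∑ p ∈ Finset.range N,
          (q ^ (2 * (p : ℤ) + 1) - q ^ (-(2 * (p : ℤ) + 1))) *
            evalL (-(q ^ (2 * (2 * (p : ℤ) - (N : ℤ) + 1)))) f := by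
  induction f using AddMonoidAlgebra.induction_linear with
  | zero =>
    have mzero : (Y + Y') (0 : LaurentPolynomial F) = 0 := map_zero _
    have ezero : ∀ x : F, evalL x (0 : LaurentPolynomial F) = 0 := fun x => evalL_zero x
    rw [mzero, evalL_zero]
    simp only [ezero, mul_zero, Finset.sum_const_zero]
    ring
  | add f g hf hg =>
    have madd : (Y + Y') ((f + g : LaurentPolynomial F)) = (Y + Y') f + (Y + Y') g := map_add _ f g
    have eadd : ∀ x : F, evalL x ((f + g : LaurentPolynomial F)) = evalL x f + evalL x g :=
      fun x => evalL_add x f g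
    have e1 : ∑ p ∈ Finset.range N,
        (q ^ (2 * (p : ℤ)) - q ^ (-(2 * (p : ℤ)))) *
          evalL (-(q ^ (2 * (2 * (p : ℤ) - (N : ℤ))))) ((f + g : LaurentPolynomial F))
        = (∑ p ∈ Finset.range N,
            (q ^ (2 * (p : ℤ)) - q ^ (-(2 * (p : ℤ)))) *
              evalL (-(q ^ (2 * (2 * (p : ℤ) - (N : ℤ))))) f)
          + ∑ p ∈ Finset.range N,
              (q ^ (2 * (p : ℤ)) - q ^ (-(2 * (p : ℤ)))) *
                evalL (-(q ^ (2 * (2 * (p : ℤ) - (N : ℤ))))) g := by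
      rw [← Finset.sum_add_distrib]
      exact Finset.sum_congr rfl fun p _ => by rw [eadd]; ring
    have e2 : ∑ p ∈ Finset.range N,
        (q ^ (2 * (p : ℤ) + 1) - q ^ (-(2 * (p : ℤ) + 1))) *
          evalL (-(q ^ (2 * (2 * (p : ℤ) - (N : ℤ) + 1)))) ((f + g : LaurentPolynomial F))
        = (∑ p ∈ Finset.range N,
            (q ^ (2 * (p : ℤ) + 1) - q ^ (-(2 * (p : ℤ) + 1))) *
              evalL (-(q ^ (2 * (2 * (p : ℤ) - (N : ℤ) + 1)))) f)
          + ∑ p ∈ Finset.range N,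
              (q ^ (2 * (p : ℤ) + 1) - q ^ (-(2 * (p : ℤ) + 1))) *
                evalL (-(q ^ (2 * (2 * (p : ℤ) - (N : ℤ) + 1)))) g := by
      rw [← Finset.sum_add_distrib]
      exact Finset.sum_congr rfl fun p _ => by rw [eadd]; ring
    rw [madd, evalL_add, eadd, e1, e2, hf, hg]
    ring
  | single a b =>
    have mY : (Y + Y') (AddMonoidAlgebra.single a b : LaurentPolynomial F) = b • ((Y + Y') (T a)) := by
      rw [show (AddMonoidAlgebra.single a b : LaurentPolynomial F) = b • T a by
        rw [T, AddMonoidAlgebra.smul_single', mul_one], map_smul]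
    rw [mY, evalL_smul]
    simp only [evalL_single]
    rw [eval_mono Y Y' hY hY' N a]
    simp only [evalL_T]
    have s1 : ∑ p ∈ Finset.range N,
        (q ^ (2 * (p : ℤ)) - q ^ (-(2 * (p : ℤ)))) *
          (b * (-(q ^ (2 * (2 * (p : ℤ) - (N : ℤ)))))^a)
        = b * ∑ p ∈ Finset.range N,
            (q ^ (2 * (p : ℤ)) - q ^ (-(2 * (p : ℤ)))) *
              (-(q ^ (2 * (2 * (p : ℤ) - (N : ℤ)))))^a := by
      rw [Finset.mul_sum]
      exact Finset.sum_congr rfl fun p _ => by ring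
    have s2 : ∑ p ∈ Finset.range N,
        (q ^ (2 * (p : ℤ) + 1) - q ^ (-(2 * (p : ℤ) + 1))) *
          (b * (-(q ^ (2 * (2 * (p : ℤ) - (N : ℤ) + 1))))^a)
        = b * ∑ p ∈ Finset.range N,
            (q ^ (2 * (p : ℤ) + 1) - q ^ (-(2 * (p : ℤ) + 1))) *
              (-(q ^ (2 * (2 * (p : ℤ) - (N : ℤ) + 1))))^a := by
      rw [Finset.mul_sum]
      exact Finset.sum_congr rfl fun p _ => by ring
    rw [s1, s2]
    ring

end
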